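/- Let M = {1^{m_1}, ..., n^{m_n}} with total size M = m_1 + ⋯ + m_n and k = M − n + 1. Then n! · [u^n] (A(x,y,u) − 1 + z)^k = Σ_{Π ∈ B_{n,k}} x^{des(Π)} y^{asc(Π)} z^{emp(Π)}, where B_{n,k} is the set of ordered set partitions of [n] into k possibly empty blocks, each block written as a permutation of its elements. -/

import Mathlib

open scoped Classical
open Finset MvPolynomial

/-- The word `w` padded with a `0` at the front and at the end; `pad w i` is the
`i`-th letter of `0, w_1, …, w_M, 0` (so `pad w 0 = 0 = pad w (M+1)`). -/
def pad (w : List ℕ) : ℕ → ℕ := fun i => (0 :: (w ++ [0])).getD i 0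

/-- number of descents (indices `0 ≤ i ≤ M` with `π_i > π_{i+1}`, convention `π_0 = π_{M+1} = 0`). -/
def desN (w : List ℕ) : ℕ :=
  ((Finset.range (w.length + 1)).filter fun i => pad w (i + 1) < pad w i).card

/-- number of ascents. -/
def ascN (w : List ℕ) : ℕ :=
  ((Finset.range (w.length + 1)).filter fun i => pad w i < pad w (i + 1)).card

/-- number of plateaus. -/
def platN (w : List ℕ) : ℕ :=
  ((Finset.range (w.length + 1)).filter fun i => pad w i = pad w (i + 1)).card

/-- number of double descents: indices `1 ≤ i ≤ M` with `π_{i-1} > π_i > π_{i+1}`. -/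
def ddN (w : List ℕ) : ℕ :=
  ((Finset.range w.length).filter fun i =>
    pad w (i + 1) < pad w i ∧ pad w (i + 2) < pad w (i + 1)).card

/-- number of cyclic descents: indices `1 ≤ i ≤ M` with `π_i > π_{i+1}`, cyclic convention
`π_{M+1} = π_1`. -/
def cdesN (w : List ℕ) : ℕ :=
  ((Finset.range w.length).filter fun i =>
    w.getD ((i + 1) % w.length) 0 < w.getD i 0).card

/-- number of cyclic ascents. -/
def cascN (w : List ℕ) : ℕ :=
  ((Finset.range w.length).filter fun i =>
    w.getD i 0 < w.getD ((i + 1) % w.length) 0).card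

/-- The permutations of `[n] = {1,…,n}`, as words (lists). -/
def Sn (n : ℕ) : Finset (List ℕ) := (List.range' 1 n).permutations.toFinset

/-- quasi-Stirling: no four positions `i<j<k<l` with `w_i = w_k`, `w_j = w_l`, `w_i ≠ w_j`
(no subword order-isomorphic to 1212 or 2121). -/
def IsQS (w : List ℕ) : Prop :=
  ¬ ∃ i j k l, i < j ∧ j < k ∧ k < l ∧ l < w.length ∧
      w.getD i 0 = w.getD k 0 ∧ w.getD j 0 = w.getD l 0 ∧ w.getD i 0 ≠ w.getD j 0

/-- The multiset `{1^{m 1}, …, n^{m n}}`, written as a (weakly increasing) list. -/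
def msetList (n : ℕ) (m : ℕ → ℕ) : List ℕ :=
  (List.range n).flatMap fun i => List.replicate (m (i + 1)) (i + 1)

/-- The finite set of quasi-Stirling multipermutations of `{1^{m 1}, …, n^{m n}}`. -/
noncomputable def QS (n : ℕ) (m : ℕ → ℕ) : Finset (List ℕ) :=
  (msetList n m).permutations.toFinset.filter IsQS

/-- `p` is a position of `w` holding a non-leftmost copy of its value. -/
def nonFirstPos (w : List ℕ) (p : ℕ) : Prop :=
  p < w.length ∧ ∃ q, q < p ∧ w.getD q 0 = w.getD p 0

/-- Rooted quasi-Stirling multipermutations: pairs `(π, r)` where `π` is quasi-Stirling and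
either `r = none` (rooted at `0`) or `r = some p` with `p` a position of a non-first copy. -/
noncomputable def RootedQS (n : ℕ) (m : ℕ → ℕ) : Finset (List ℕ × Option ℕ) :=
  ((QS n m) ×ˢ insert none ((Finset.range (msetList n m).length).image some)).filter
    fun P => ∀ r, P.2 = some r → nonFirstPos P.1 r

/-- Sum of the block sizes of the blocks preceding block `i`. -/
def offsetC {k : ℕ} (c : Fin k → ℕ) (i : Fin k) : ℕ :=
  ∑ j ∈ Finset.univ.filter (fun j : Fin k => (j : ℕ) < (i : ℕ)), c j

/-- The `i`-th block of the ordered set partition encoded by the word `w` together with the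
composition `c` of block sizes. -/
def blockOf (k : ℕ) (w : List ℕ) (c : Fin k → ℕ) (i : Fin k) : List ℕ :=
  (w.drop (offsetC c i)).take (c i)

/-- `B_{n,k}`: ordered set partitions of `[n]` into `k` possibly empty blocks, each block
written as a permutation of its elements; encoded as a pair `(w, c)` of a permutation word
`w` of `[n]` and a composition `c` of `n` into `k` nonnegative parts (the block sizes). -/
def Bnk (n k : ℕ) : Finset (List ℕ × (Fin k → ℕ)) :=
  Sn n ×ˢ Finset.Nat.antidiagonalTuple k n

/-- blockwise descent number of an ordered set partition. -/
def desB {k : ℕ} (P : List ℕ × (Fin k → ℕ)) : ℕ := ∑ i, desN (blockOf k P.1 P.2 i)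

/-- blockwise ascent number of an ordered set partition. -/
def ascB {k : ℕ} (P : List ℕ × (Fin k → ℕ)) : ℕ := ∑ i, ascN (blockOf k P.1 P.2 i)

/-- number of empty blocks of an ordered set partition. -/
def empB {k : ℕ} (P : List ℕ × (Fin k → ℕ)) : ℕ :=
  (Finset.univ.filter fun i => P.2 i = 0).card

/-- `A(x,y,u) = Σ_{n ≥ 0} A_n(x,y) uⁿ/n!`, power series in `u` with coefficients in
`ℚ[x,y,z] = MvPolynomial (Fin 3) ℚ` (`x = X 0`, `y = X 1`, `z = X 2`). -/
noncomputable def AEGF3 : PowerSeries (MvPolynomial (Fin 3) ℚ) :=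
  PowerSeries.mk fun j => (j.factorial : ℚ)⁻¹ •
    ∑ w ∈ Sn j, (X 0 : MvPolynomial (Fin 3) ℚ) ^ desN w * (X 1) ^ ascN w

/-- The global index of the `j`-th gap of block `i` (each block `i` has `c i + 1` gaps). -/
def gapIdx {k : ℕ} (c : Fin k → ℕ) (i : Fin k) (j : ℕ) : ℕ :=
  (∑ j' ∈ Finset.univ.filter (fun j' : Fin k => (j' : ℕ) < (i : ℕ)), (c j' + 1)) + j

/-- A bar placement `b` (bars per gap, `n + k` gaps in total) is good for the ordered set
partition `(w, c) ∈ B_{n,k}` if every descent gap of every block receives at least one bar. -/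
def GoodBars (n k : ℕ) (w : List ℕ) (c : Fin k → ℕ) (b : Fin (n + k) → ℕ) : Prop :=
  ∀ i : Fin k, ∀ j ≤ c i,
    pad (blockOf k w c i) (j + 1) < pad (blockOf k w c i) j →
      ∀ g : Fin (n + k), (g : ℕ) = gapIdx c i j → 1 ≤ b g

/-- `π_i` (1-indexed, `pad w i`) is the last copy of its value in `w`. -/
def lastCopy (w : List ℕ) (i : ℕ) : Prop :=
  ∀ j, i < j → j ≤ w.length → pad w j ≠ pad w i

/-- `π_p` is the first copy of its value; by convention the boundary entry `π_{M+1} = 0`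
is regarded as a second (non-first) copy of `0`. -/
def firstCopy (w : List ℕ) (p : ℕ) : Prop :=
  p ≤ w.length ∧ ∀ j, 1 ≤ j → j < p → pad w j ≠ pad w p

/-- sibling descent of type I at `i`: `π_{i+1}` is a first copy and `π_i > π_{i+1}`. -/
def TypeI (w : List ℕ) (i : ℕ) : Prop :=
  firstCopy w (i + 1) ∧ pad w (i + 1) < pad w i

/-- `i` is a sibling descent: `π_i` is a last copy, and either type I holds at `i` or
`π_{i+1}` is a non-first copy (type II). -/
def SDes (w : List ℕ) (i : ℕ) : Prop :=
  lastCopy w i ∧ (TypeI w i ∨ ¬ firstCopy w (i + 1))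

/-- number of sibling descents (indices `1 ≤ i ≤ M`). -/
noncomputable def sdN (w : List ℕ) : ℕ :=
  ((Finset.Icc 1 w.length).filter (SDes w)).card

/-- number of double sibling descents: indices `2 ≤ i ≤ M` such that both `i-1` and `i`
are sibling descents and `i-1` is of type I. -/
noncomputable def dsdN (w : List ℕ) : ℕ :=
  ((Finset.Icc 2 w.length).filter fun i =>
    SDes w (i - 1) ∧ SDes w i ∧ TypeI w (i - 1)).card
/-! ### Auxiliary development for `stmt7` -/

section Stmt7Aux

local notation "Rq" => MvPolynomial (Fin 3) ℚ

/-- Descent–ascent polynomial `A_j(x,y)`. -/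
noncomputable def Aq (j : ℕ) : Rq :=
  ∑ w ∈ Sn j, (X 0 : Rq) ^ desN w * (X 1) ^ ascN w

lemma mem_Sn {n : ℕ} {w : List ℕ} : w ∈ Sn n ↔ w.Perm (List.range' 1 n) := by
  simp [Sn, List.mem_permutations]

lemma length_of_mem_Sn {n : ℕ} {w : List ℕ} (h : w ∈ Sn n) : w.length = n := by
  rw [mem_Sn] at h; simpa using h.length_eq

lemma mem_range_of_mem_Sn {n : ℕ} {w : List ℕ} (h : w ∈ Sn n) {x : ℕ} (hx : x ∈ w) :
    1 ≤ x ∧ x ≤ n := by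
  rw [mem_Sn] at h
  have := h.subset hx
  rw [List.mem_range'] at this
  omega

lemma card_Sn (n : ℕ) : (Sn n).card = n.factorial := by
  rw [Sn, List.toFinset_card_of_nodup (List.nodup_permutations _ (List.nodup_range' (s := 1) (n := n)))]
  simp [List.length_permutations]

lemma Sn_zero : Sn 0 = {([] : List ℕ)} := by
  simp [Sn, List.permutations_nil]

lemma desN_nil : desN [] = 0 := rfl
lemma ascN_nil : ascN [] = 0 := rfl

lemma Aq_zero : Aq 0 = 1 := by
  simp [Aq, Sn_zero, desN_nil, ascN_nil]

/-! ### `pad` lemmas -/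

lemma pad_mem' (l : List ℕ) (i : ℕ) : pad l i ∈ 0 :: l := by
  unfold pad
  rcases lt_or_ge i (0 :: (l ++ [0])).length with h | h
  · rw [List.getD_eq_getElem _ _ h]
    have hm : (0 :: (l ++ [0]))[i] ∈ 0 :: (l ++ [0]) := List.getElem_mem h
    simp only [List.mem_cons, List.mem_append, List.mem_singleton] at hm ⊢
    tauto
  · rw [List.getD_eq_default _ _ h]; simp

lemma pad_map (σ : ℕ → ℕ) (hσ : σ 0 = 0) (l : List ℕ) (i : ℕ) :
    pad (l.map σ) i = σ (pad l i) := by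
  unfold pad
  have h0 : (0 : ℕ) :: (l.map σ ++ [0]) = (0 :: (l ++ [0])).map σ := by
    simp [hσ]
  rw [h0]
  rcases lt_or_ge i (0 :: (l ++ [0])).length with h | h
  · rw [List.getD_eq_getElem _ _ (by simpa using h), List.getD_eq_getElem _ _ h,
      List.getElem_map]
  · rw [List.getD_eq_default _ _ (by simpa using h), List.getD_eq_default _ _ h, hσ]

lemma desN_map {σ : ℕ → ℕ} {l : List ℕ} (hσ : σ 0 = 0)
    (hm : ∀ x ∈ 0 :: l, ∀ y ∈ 0 :: l, (x < y ↔ σ x < σ y)) :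
    desN (l.map σ) = desN l := by
  unfold desN
  rw [List.length_map]
  congr 1
  apply Finset.filter_congr
  intro i _
  rw [pad_map σ hσ, pad_map σ hσ]
  exact (hm _ (pad_mem' l (i + 1)) _ (pad_mem' l i)).symm

lemma ascN_map {σ : ℕ → ℕ} {l : List ℕ} (hσ : σ 0 = 0)
    (hm : ∀ x ∈ 0 :: l, ∀ y ∈ 0 :: l, (x < y ↔ σ x < σ y)) :
    ascN (l.map σ) = ascN l := by
  unfold ascN
  rw [List.length_map]
  congr 1
  apply Finset.filter_congr
  intro i _
  rw [pad_map σ hσ, pad_map σ hσ]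
  exact (hm _ (pad_mem' l i) _ (pad_mem' l (i + 1))).symm

/-! ### enumeration of a finite set -/

/-- `enum S j` is the `j`-th smallest element of `S` (1-indexed), with `enum S 0 = 0`. -/
noncomputable def enum (S : Finset ℕ) : ℕ → ℕ :=
  fun j => if j = 0 then 0 else (S.sort (· ≤ ·)).getD (j - 1) 0

lemma enum_zero (S : Finset ℕ) : enum S 0 = 0 := rfl

lemma enum_mem (S : Finset ℕ) {j : ℕ} (h1 : 1 ≤ j) (h2 : j ≤ S.card) : enum S j ∈ S := by
  unfold enum
  rw [if_neg (by omega)]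
  have hlen : (S.sort (· ≤ ·)).length = S.card := Finset.length_sort _
  rw [List.getD_eq_getElem _ _ (by omega)]
  exact (Finset.mem_sort _).mp (List.getElem_mem _)

lemma enum_strictMonoOn (S : Finset ℕ) (hS : ∀ x ∈ S, 1 ≤ x) {x y : ℕ}
    (hxy : x < y) (hy : y ≤ S.card) : enum S x < enum S y := by
  have hlen : (S.sort (· ≤ ·)).length = S.card := Finset.length_sort _
  have hym : enum S y ∈ S := enum_mem S (by omega) hy
  rcases Nat.eq_zero_or_pos x with rfl | hx
  · rw [enum_zero]
    exact lt_of_lt_of_le Nat.zero_lt_one (hS _ hym)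
  · unfold enum
    rw [if_neg (by omega), if_neg (by omega),
      List.getD_eq_getElem _ _ (by omega), List.getD_eq_getElem _ _ (by omega)]
    have := (((Finset.pairwise_sort S (· ≤ ·)).and (Finset.sort_nodup S (· ≤ ·))).imp
      (fun h => lt_of_le_of_ne h.1 h.2)).rel_get_of_lt
      (a := ⟨x - 1, by omega⟩) (b := ⟨y - 1, by omega⟩) (by simp [Fin.lt_def]; omega)
    simpa [List.get_eq_getElem] using this

lemma enum_lt_iff (S : Finset ℕ) (hS : ∀ x ∈ S, 1 ≤ x) {x y : ℕ}
    (hx : x ≤ S.card) (hy : y ≤ S.card) : x < y ↔ enum S x < enum S y := by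
  constructor
  · intro h; exact enum_strictMonoOn S hS h hy
  · intro h
    by_contra h'
    push_neg at h'
    rcases Nat.lt_or_ge y x with h2 | h2
    · exact absurd h (not_lt_of_ge (le_of_lt (enum_strictMonoOn S hS h2 hx)))
    · have : y = x := le_antisymm h' h2
      subst this
      exact lt_irrefl _ h

lemma enum_inj (S : Finset ℕ) (hS : ∀ x ∈ S, 1 ≤ x) {x y : ℕ}
    (hx : x ≤ S.card) (hy : y ≤ S.card) (h : enum S x = enum S y) : x = y := by
  rcases lt_trichotomy x y with h2 | h2 | h2
  · exact absurd h (ne_of_lt (enum_strictMonoOn S hS h2 hy))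
  · exact h2
  · exact absurd h.symm (ne_of_lt (enum_strictMonoOn S hS h2 hx))

lemma map_enum_range' (S : Finset ℕ) (a : ℕ) (hcard : S.card = a) :
    (List.range' 1 a).map (enum S) = S.sort (· ≤ ·) := by
  have hlen : (S.sort (· ≤ ·)).length = S.card := Finset.length_sort _
  apply List.ext_getElem
  · simp [hlen, hcard]
  · intro i h1 h2
    simp only [List.getElem_map, List.getElem_range']
    unfold enum
    rw [if_neg (by omega)]
    have h3 : 1 + 1 * i - 1 = i := by omega
    rw [h3, List.getD_eq_getElem _ _ (by omega)]

/-! ### pattern invariance -/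

def PatInv (F : List ℕ → Rq) : Prop :=
  ∀ (σ : ℕ → ℕ) (l : List ℕ), σ 0 = 0 →
    (∀ x ∈ 0 :: l, ∀ y ∈ 0 :: l, (x < y ↔ σ x < σ y)) → F (l.map σ) = F l

lemma patInv_xy : PatInv (fun l => (X 0 : Rq) ^ desN l * (X 1) ^ ascN l) := by
  intro σ l h0 hm
  simp only [desN_map h0 hm, ascN_map h0 hm]

lemma patInv_blocks (k : ℕ) (c : Fin k → ℕ) :
    PatInv (fun v => ∏ i, (X 0 : Rq) ^ desN (blockOf k v c i) * (X 1) ^ ascN (blockOf k v c i)) := by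
  intro σ l h0 hm
  apply Finset.prod_congr rfl
  intro i _
  have hb : blockOf k (l.map σ) c i = (blockOf k l c i).map σ := by
    simp [blockOf, List.map_take, List.map_drop]
  have hsub : ∀ x ∈ 0 :: blockOf k l c i, x ∈ 0 :: l := by
    intro x hx
    rcases List.mem_cons.mp hx with h | h
    · simp [h]
    · exact List.mem_cons.mpr (Or.inr (List.drop_subset _ _ (List.take_subset _ _ h)))
  have hm' : ∀ x ∈ 0 :: blockOf k l c i, ∀ y ∈ 0 :: blockOf k l c i,
      (x < y ↔ σ x < σ y) := fun x hx y hy => hm x (hsub x hx) y (hsub y hy)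
  rw [hb, desN_map h0 hm', ascN_map h0 hm']

/-! ### the split lemma -/

lemma split_lemma (n a : ℕ) (ha : a ≤ n) (F G : List ℕ → Rq)
    (hF : PatInv F) (hG : PatInv G) :
    ∑ w ∈ Sn n, F (w.take a) * G (w.drop a)
      = (n.choose a : ℚ) • ((∑ u ∈ Sn a, F u) * ∑ v ∈ Sn (n - a), G v) := by
  classical
  set T : Finset (Finset ℕ × (List ℕ × List ℕ)) :=
    ((Finset.Icc 1 n).powersetCard a) ×ˢ (Sn a ×ˢ Sn (n - a)) with hT
  set Φ : Finset ℕ × (List ℕ × List ℕ) → List ℕ :=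
    fun t => (t.2.1.map (enum t.1)) ++ (t.2.2.map (enum (Finset.Icc 1 n \ t.1))) with hΦ
  -- facts for members of T
  have hmemT : ∀ t ∈ T, t.1 ⊆ Finset.Icc 1 n ∧ t.1.card = a ∧ t.2.1 ∈ Sn a ∧ t.2.2 ∈ Sn (n - a) := by
    intro t ht
    rw [hT, Finset.mem_product, Finset.mem_product, Finset.mem_powersetCard] at ht
    exact ⟨ht.1.1, ht.1.2, ht.2.1, ht.2.2⟩
  have hIccRange : (List.range' 1 n).toFinset = Finset.Icc 1 n := by
    ext x
    simp only [List.mem_toFinset, List.mem_range'_1, Finset.mem_Icc]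
    omega
  -- basic facts about parts
  have hpart1 : ∀ t ∈ T, (t.2.1.map (enum t.1)).Perm (t.1.sort (· ≤ ·)) := by
    intro t ht
    obtain ⟨hsub, hcard, hu, hv⟩ := hmemT t ht
    have := (mem_Sn.mp hu).map (enum t.1)
    rwa [map_enum_range' t.1 a hcard] at this
  have hpart2 : ∀ t ∈ T, (t.2.2.map (enum (Finset.Icc 1 n \ t.1))).Perm
      ((Finset.Icc 1 n \ t.1).sort (· ≤ ·)) := by
    intro t ht
    obtain ⟨hsub, hcard, hu, hv⟩ := hmemT t ht
    have hcard' : (Finset.Icc 1 n \ t.1).card = n - a := by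
      rw [Finset.card_sdiff_of_subset hsub, Nat.card_Icc]; omega
    have := (mem_Sn.mp hv).map (enum (Finset.Icc 1 n \ t.1))
    rwa [map_enum_range' _ (n - a) hcard'] at this
  -- Φ maps into Sn n
  have hΦmem : ∀ t ∈ T, Φ t ∈ Sn n := by
    intro t ht
    obtain ⟨hsub, hcard, hu, hv⟩ := hmemT t ht
    rw [mem_Sn]
    have hperm : (Φ t).Perm
        ((t.1.sort (· ≤ ·)) ++ ((Finset.Icc 1 n \ t.1).sort (· ≤ ·))) :=
      (hpart1 t ht).append (hpart2 t ht)
    refine hperm.trans ?_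
    apply List.perm_of_nodup_nodup_toFinset_eq
    · rw [List.nodup_append]
      refine ⟨Finset.sort_nodup _ _, Finset.sort_nodup _ _, ?_⟩
      intro x hx y hy hxy
      rw [Finset.mem_sort] at hx hy
      subst hxy
      exact (Finset.mem_sdiff.mp hy).2 hx
    · exact List.nodup_range' (s := 1) (n := n)
    · rw [List.toFinset_append, Finset.sort_toFinset, Finset.sort_toFinset, hIccRange,
        Finset.union_sdiff_of_subset hsub]
  -- lengths
  have hlen1 : ∀ t ∈ T, (t.2.1.map (enum t.1)).length = a := by
    intro t ht
    obtain ⟨_, _, hu, _⟩ := hmemT t ht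
    rw [List.length_map]; exact length_of_mem_Sn hu
  -- summand value
  have hval : ∀ t ∈ T, F ((Φ t).take a) * G ((Φ t).drop a) = F t.2.1 * G t.2.2 := by
    intro t ht
    obtain ⟨hsub, hcard, hu, hv⟩ := hmemT t ht
    have htake : (Φ t).take a = t.2.1.map (enum t.1) := by
      rw [hΦ]; exact List.take_left' (hlen1 t ht)
    have hdrop : (Φ t).drop a = t.2.2.map (enum (Finset.Icc 1 n \ t.1)) := by
      rw [hΦ]; exact List.drop_left' (hlen1 t ht)
    have hS1 : ∀ x ∈ t.1, 1 ≤ x := fun x hx => (Finset.mem_Icc.mp (hsub hx)).1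
    have hS2 : ∀ x ∈ Finset.Icc 1 n \ t.1, 1 ≤ x := fun x hx =>
      (Finset.mem_Icc.mp (Finset.mem_sdiff.mp hx).1).1
    have hcard2 : (Finset.Icc 1 n \ t.1).card = n - a := by
      rw [Finset.card_sdiff_of_subset hsub, Nat.card_Icc]; omega
    have hF' : F (t.2.1.map (enum t.1)) = F t.2.1 := by
      apply hF _ _ (enum_zero _)
      intro x hx y hy
      have hxa : x ≤ a := by
        rcases List.mem_cons.mp hx with h | h
        · omega
        · exact (mem_range_of_mem_Sn hu h).2
      have hya : y ≤ a := by
        rcases List.mem_cons.mp hy with h | h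
        · omega
        · exact (mem_range_of_mem_Sn hu h).2
      exact enum_lt_iff _ hS1 (by omega) (by omega)
    have hG' : G (t.2.2.map (enum (Finset.Icc 1 n \ t.1))) = G t.2.2 := by
      apply hG _ _ (enum_zero _)
      intro x hx y hy
      have hxa : x ≤ n - a := by
        rcases List.mem_cons.mp hx with h | h
        · omega
        · exact (mem_range_of_mem_Sn hv h).2
      have hya : y ≤ n - a := by
        rcases List.mem_cons.mp hy with h | h
        · omega
        · exact (mem_range_of_mem_Sn hv h).2
      exact enum_lt_iff _ hS2 (by omega) (by omega)
    rw [htake, hdrop, hF', hG']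
  -- injectivity
  have hinj : Set.InjOn Φ T := by
    intro t ht t' ht' heq
    obtain ⟨hsub, hcard, hu, hv⟩ := hmemT t ht
    obtain ⟨hsub', hcard', hu', hv'⟩ := hmemT t' ht'
    have h1 : t.2.1.map (enum t.1) = t'.2.1.map (enum t'.1) := by
      have := congrArg (List.take a) heq
      rwa [hΦ, List.take_left' (hlen1 t ht), List.take_left' (hlen1 t' ht')] at this
    have h2 : t.2.2.map (enum (Finset.Icc 1 n \ t.1))
        = t'.2.2.map (enum (Finset.Icc 1 n \ t'.1)) := by
      have := congrArg (List.drop a) heq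
      rwa [hΦ, List.drop_left' (hlen1 t ht), List.drop_left' (hlen1 t' ht')] at this
    have hSeq : t.1 = t'.1 := by
      have e1 : (t.2.1.map (enum t.1)).toFinset = t.1 := by
        rw [List.toFinset_eq_of_perm _ _ (hpart1 t ht), Finset.sort_toFinset]
      have e2 : (t'.2.1.map (enum t'.1)).toFinset = t'.1 := by
        rw [List.toFinset_eq_of_perm _ _ (hpart1 t' ht'), Finset.sort_toFinset]
      rw [← e1, ← e2, h1]
    have hS1 : ∀ x ∈ t.1, 1 ≤ x := fun x hx => (Finset.mem_Icc.mp (hsub hx)).1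
    have hS2 : ∀ x ∈ Finset.Icc 1 n \ t.1, 1 ≤ x := fun x hx =>
      (Finset.mem_Icc.mp (Finset.mem_sdiff.mp hx).1).1
    have hcard2 : (Finset.Icc 1 n \ t.1).card = n - a := by
      rw [Finset.card_sdiff_of_subset hsub, Nat.card_Icc]; omega
    have hueq : t.2.1 = t'.2.1 := by
      rw [hSeq] at h1
      apply List.ext_getElem
      · rw [length_of_mem_Sn hu, length_of_mem_Sn hu']
      · intro i hi hi'
        have e := List.getElem_of_eq h1 (by simpa using hi)
        rw [List.getElem_map, List.getElem_map] at e
        have hx := (mem_range_of_mem_Sn hu (List.getElem_mem hi)).2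
        have hy := (mem_range_of_mem_Sn hu' (List.getElem_mem hi')).2
        exact enum_inj t'.1 (hSeq ▸ hS1) (by omega) (by omega) e
    have hveq : t.2.2 = t'.2.2 := by
      rw [hSeq] at h2
      apply List.ext_getElem
      · rw [length_of_mem_Sn hv, length_of_mem_Sn hv']
      · intro i hi hi'
        have e := List.getElem_of_eq h2 (by simpa using hi)
        rw [List.getElem_map, List.getElem_map] at e
        have hx := (mem_range_of_mem_Sn hv (List.getElem_mem hi)).2
        have hy := (mem_range_of_mem_Sn hv' (List.getElem_mem hi')).2
        have hS2' : ∀ x ∈ Finset.Icc 1 n \ t'.1, 1 ≤ x := fun x hx =>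
          (Finset.mem_Icc.mp (Finset.mem_sdiff.mp hx).1).1
        have hcard2' : (Finset.Icc 1 n \ t'.1).card = n - a := by
          rw [Finset.card_sdiff_of_subset hsub', Nat.card_Icc]; omega
        exact enum_inj _ hS2' (by rw [hcard2']; omega) (by rw [hcard2']; omega) e
    exact Prod.ext hSeq (Prod.ext hueq hveq)
  -- image covers Sn n
  have himg : T.image Φ = Sn n := by
    apply Finset.eq_of_subset_of_card_le
    · intro w hw
      obtain ⟨t, ht, rfl⟩ := Finset.mem_image.mp hw
      exact hΦmem t ht
    · rw [Finset.card_image_of_injOn hinj, card_Sn, hT, Finset.card_product,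
        Finset.card_product, Finset.card_powersetCard, Nat.card_Icc, card_Sn, card_Sn]
      have h1 : n + 1 - 1 = n := by omega
      rw [h1, ← mul_assoc, Nat.choose_mul_factorial_mul_factorial ha]
  calc ∑ w ∈ Sn n, F (w.take a) * G (w.drop a)
      = ∑ w ∈ T.image Φ, F (w.take a) * G (w.drop a) := by rw [himg]
    _ = ∑ t ∈ T, F ((Φ t).take a) * G ((Φ t).drop a) := Finset.sum_image (fun x hx y hy h => hinj hx hy h)
    _ = ∑ t ∈ T, F t.2.1 * G t.2.2 := Finset.sum_congr rfl hval
    _ = ∑ _S ∈ (Finset.Icc 1 n).powersetCard a, ∑ p ∈ Sn a ×ˢ Sn (n - a), F p.1 * G p.2 := by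
        rw [hT, Finset.sum_product]
    _ = (n.choose a : ℚ) • ((∑ u ∈ Sn a, F u) * ∑ v ∈ Sn (n - a), G v) := by
        have hinner : ∑ p ∈ Sn a ×ˢ Sn (n - a), F p.1 * G p.2
            = (∑ u ∈ Sn a, F u) * ∑ v ∈ Sn (n - a), G v := by
          rw [Finset.sum_product, ← Finset.sum_mul_sum]
        rw [hinner, Finset.sum_const, Finset.card_powersetCard, Nat.card_Icc,
          Nat.add_sub_cancel]
        exact (Nat.cast_smul_eq_nsmul ℚ _ _).symm

/-! ### block decomposition -/

lemma offsetC_zero {k : ℕ} (c : Fin (k + 1) → ℕ) : offsetC c 0 = 0 := by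
  unfold offsetC
  simp

lemma offsetC_succ {k : ℕ} (c : Fin (k + 1) → ℕ) (i : Fin k) :
    offsetC c i.succ = c 0 + offsetC (c ∘ Fin.succ) i := by
  simp only [offsetC, Finset.sum_filter]
  rw [Fin.sum_univ_succ]
  congr 1
  · simp

lemma blockOf_zero {k : ℕ} (w : List ℕ) (c : Fin (k + 1) → ℕ) :
    blockOf (k + 1) w c 0 = w.take (c 0) := by
  rw [blockOf, offsetC_zero, List.drop_zero]

lemma blockOf_succ {k : ℕ} (w : List ℕ) (c : Fin (k + 1) → ℕ) (i : Fin k) :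
    blockOf (k + 1) w c i.succ = blockOf k (w.drop (c 0)) (c ∘ Fin.succ) i := by
  rw [blockOf, blockOf, offsetC_succ, List.drop_drop]
  rfl

/-! ### the core combinatorial lemma -/

lemma core_lemma (k : ℕ) : ∀ (n : ℕ) (c : Fin k → ℕ), (∑ i, c i) = n →
    ∑ w ∈ Sn n, ∏ i, (X 0 : Rq) ^ desN (blockOf k w c i) * (X 1) ^ ascN (blockOf k w c i)
      = ((n.factorial : ℚ) * ∏ i, ((c i).factorial : ℚ)⁻¹) • ∏ i, Aq (c i) := by
  induction k with
  | zero =>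
      intro n c hc
      have hn : n = 0 := by simpa using hc.symm
      subst hn
      simp [Sn_zero]
  | succ k IH =>
      intro n c hc
      have ha : c 0 ≤ n := by
        rw [← hc]
        exact Finset.single_le_sum (fun i _ => Nat.zero_le _) (Finset.mem_univ 0)
      have hm : (∑ i, (c ∘ Fin.succ) i) = n - c 0 := by
        rw [Fin.sum_univ_succ] at hc
        simp only [Function.comp_apply]
        omega
      calc ∑ w ∈ Sn n, ∏ i, (X 0 : Rq) ^ desN (blockOf (k+1) w c i) * (X 1) ^ ascN (blockOf (k+1) w c i)
          = ∑ w ∈ Sn n,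
              ((fun l => (X 0 : Rq) ^ desN l * (X 1) ^ ascN l) (w.take (c 0)))
              * ((fun v => ∏ i, (X 0 : Rq) ^ desN (blockOf k v (c ∘ Fin.succ) i)
                  * (X 1) ^ ascN (blockOf k v (c ∘ Fin.succ) i)) (w.drop (c 0))) := by
            apply Finset.sum_congr rfl
            intro w _
            simp only
            rw [Fin.prod_univ_succ, blockOf_zero]
            congr 1
            apply Finset.prod_congr rfl
            intro i _
            rw [blockOf_succ]
        _ = (n.choose (c 0) : ℚ) •
              ((∑ u ∈ Sn (c 0), (X 0 : Rq) ^ desN u * (X 1) ^ ascN u)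
                * ∑ v ∈ Sn (n - c 0), ∏ i, (X 0 : Rq) ^ desN (blockOf k v (c ∘ Fin.succ) i)
                    * (X 1) ^ ascN (blockOf k v (c ∘ Fin.succ) i)) :=
            split_lemma n (c 0) ha _ _ patInv_xy (patInv_blocks k (c ∘ Fin.succ))
        _ = (n.choose (c 0) : ℚ) •
              (Aq (c 0) * ((((n - c 0).factorial : ℚ)
                  * ∏ i, (((c ∘ Fin.succ) i).factorial : ℚ)⁻¹)
                • ∏ i, Aq ((c ∘ Fin.succ) i))) := by
            rw [IH (n - c 0) (c ∘ Fin.succ) hm, Aq]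
        _ = ((n.factorial : ℚ) * ∏ i, ((c i).factorial : ℚ)⁻¹) • ∏ i, Aq (c i) := by
            rw [Fin.prod_univ_succ (f := fun i => ((c i).factorial : ℚ)⁻¹),
              Fin.prod_univ_succ (f := fun i => Aq (c i))]
            have hcompA : (∏ i, Aq ((c ∘ Fin.succ) i)) = ∏ i : Fin k, Aq (c i.succ) := rfl
            rw [hcompA, mul_smul_comm, smul_smul]
            congr 1
            have hfa : ((c 0).factorial : ℚ) ≠ 0 :=
              Nat.cast_ne_zero.mpr (Nat.factorial_ne_zero _)
            have hfb : (((n - c 0).factorial : ℚ)) ≠ 0 :=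
              Nat.cast_ne_zero.mpr (Nat.factorial_ne_zero _)
            have key : (n.choose (c 0) : ℚ) * ((n - c 0).factorial : ℚ)
                = (n.factorial : ℚ) * (((c 0).factorial : ℚ))⁻¹ := by
              rw [Nat.cast_choose ℚ ha]
              field_simp
            have hcomp : (∏ i, (((c ∘ Fin.succ) i).factorial : ℚ)⁻¹)
                = ∏ i : Fin k, ((c i.succ).factorial : ℚ)⁻¹ := rfl
            rw [hcomp, ← mul_assoc, key, mul_assoc]

lemma prod_smulQ {ι : Type*} (s : Finset ι) (b : ι → ℚ) (f : ι → Rq) :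
    ∏ i ∈ s, b i • f i = (∏ i ∈ s, b i) • ∏ i ∈ s, f i := by
  induction s using Finset.cons_induction_on with
  | empty => simp
  | cons _ _ hj ih =>
      rw [Finset.prod_cons, Finset.prod_cons, Finset.prod_cons, ih, smul_mul_smul_comm]

/-! ### power-series coefficients -/

lemma coeff_F (j : ℕ) :
    (PowerSeries.coeff (R := Rq) j) (AEGF3 - 1 + PowerSeries.C (R := Rq) (X 2))
      = if j = 0 then (X 2 : Rq) else (j.factorial : ℚ)⁻¹ • Aq j := by
  rw [map_add, map_sub, PowerSeries.coeff_C, AEGF3, PowerSeries.coeff_mk]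
  rcases eq_or_ne j 0 with rfl | hj
  · simp [Sn_zero, desN_nil, ascN_nil]
  · simp [hj, Aq, PowerSeries.coeff_one]

lemma coeff_pow_tuple (φ : PowerSeries Rq) (k n : ℕ) :
    (PowerSeries.coeff (R := Rq) n) (φ ^ k)
      = ∑ c ∈ Finset.Nat.antidiagonalTuple k n, ∏ i, (PowerSeries.coeff (R := Rq) (c i)) φ := by
  classical
  rw [PowerSeries.coeff_pow]
  refine Finset.sum_nbij' (i := fun l => fun i : Fin k => l (i : ℕ))
    (j := fun c => Finsupp.onFinset (Finset.range k)
      (fun j => if h : j < k then c ⟨j, h⟩ else 0)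
      (fun j hj => by
        rw [Finset.mem_range]
        by_contra h
        simp [h] at hj)) ?_ ?_ ?_ ?_ ?_
  · intro l hl
    rw [Finset.mem_finsuppAntidiag] at hl
    rw [Finset.Nat.mem_antidiagonalTuple]
    rw [Fin.sum_univ_eq_sum_range (fun i => l i) k]
    exact hl.1
  · intro c hcm
    rw [Finset.Nat.mem_antidiagonalTuple] at hcm
    rw [Finset.mem_finsuppAntidiag]
    refine ⟨?_, Finsupp.support_onFinset_subset⟩
    have hs : ∀ f : ℕ → ℕ, (∀ j (h : j < k), f j = c ⟨j, h⟩) →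
        ∑ j ∈ Finset.range k, f j = n := by
      intro f hf
      rw [← Fin.sum_univ_eq_sum_range f k, ← hcm]
      refine Finset.sum_congr rfl (fun i _ => ?_)
      rw [hf i i.is_lt]
    refine hs _ fun j h => ?_
    simp [h]
  · intro l hl
    rw [Finset.mem_finsuppAntidiag] at hl
    ext j
    simp only [Finsupp.onFinset_apply]
    split
    · rfl
    · next h =>
      symm
      rw [← Finsupp.notMem_support_iff]
      intro hmem
      have := hl.2 hmem
      rw [Finset.mem_range] at this
      exact h this
  · intro c _
    funext i
    simp only [Finsupp.onFinset_apply, Fin.is_lt, dif_pos, Fin.eta]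
  · intro l _
    exact (Fin.prod_univ_eq_prod_range (fun i => (PowerSeries.coeff (R := Rq) (l i)) φ) k).symm

end Stmt7Aux

/-- `n!·[uⁿ](A(x,y,u) − 1 + z)^k = Σ_{Π ∈ B_{n,k}} x^{des Π} y^{asc Π} z^{emp Π}`,
with `k = M − n + 1`. -/
theorem stmt7 (n : ℕ) (mlt : ℕ → ℕ) (hm : ∀ i, 1 ≤ i → i ≤ n → 1 ≤ mlt i)
    (k : ℕ) (hk : k = (∑ i ∈ Finset.range n, mlt (i + 1)) - n + 1) :
    (n.factorial : ℚ) •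
        (PowerSeries.coeff (R := MvPolynomial (Fin 3) ℚ) n)
          ((AEGF3 - 1 + PowerSeries.C (R := MvPolynomial (Fin 3) ℚ) (X 2)) ^ k) =
      ∑ P ∈ Bnk n k,
        (X 0 : MvPolynomial (Fin 3) ℚ) ^ desB P * (X 1) ^ ascB P * (X 2) ^ empB P := by
  clear hm hk
  rw [coeff_pow_tuple, Finset.smul_sum,
    show Bnk n k = Sn n ×ˢ Finset.Nat.antidiagonalTuple k n from rfl,
    Finset.sum_product_right]
  apply Finset.sum_congr rfl
  intro c hc
  have hc' : (∑ i, c i) = n := Finset.Nat.mem_antidiagonalTuple.mp hc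
  have h1 : (∏ i, (PowerSeries.coeff (R := MvPolynomial (Fin 3) ℚ) (c i))
        (AEGF3 - 1 + PowerSeries.C (R := MvPolynomial (Fin 3) ℚ) (X 2)))
      = (∏ i, ((c i).factorial : ℚ)⁻¹) •
        ∏ i, (if c i = 0 then (X 2 : MvPolynomial (Fin 3) ℚ) else 1) * Aq (c i) := by
    rw [← prod_smulQ]
    apply Finset.prod_congr rfl
    intro i _
    rw [coeff_F]
    rcases eq_or_ne (c i) 0 with h | h
    · simp [h, Aq_zero]
    · simp [h]
  have h2 : (∏ i, (if c i = 0 then (X 2 : MvPolynomial (Fin 3) ℚ) else 1) * Aq (c i))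
      = (X 2 : MvPolynomial (Fin 3) ℚ) ^ (Finset.univ.filter fun i => c i = 0).card
        * ∏ i, Aq (c i) := by
    rw [Finset.prod_mul_distrib, Finset.prod_ite, Finset.prod_const, Finset.prod_const_one,
      mul_one]
  have h3 : ∀ w, (X 0 : MvPolynomial (Fin 3) ℚ) ^ desB (w, c) * (X 1) ^ ascB (w, c)
        * (X 2) ^ empB (w, c)
      = (∏ i, (X 0 : MvPolynomial (Fin 3) ℚ) ^ desN (blockOf k w c i)
          * (X 1) ^ ascN (blockOf k w c i))
        * (X 2) ^ (Finset.univ.filter fun i => c i = 0).card := by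
    intro w
    simp only [desB, ascB, empB]
    rw [← Finset.prod_pow_eq_pow_sum, ← Finset.prod_pow_eq_pow_sum, ← Finset.prod_mul_distrib]
  rw [h1, h2, smul_smul, Finset.sum_congr rfl fun w _ => h3 w, ← Finset.sum_mul,
    core_lemma k n c hc', smul_mul_assoc]
  congr 1
  exact mul_comm _ _
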